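/- arXiv:2502.21050 — 2 statements merged into one kernel-verified Lean document; each statement's English description precedes it below -/
import Mathlib

section
/- For all n ≥ 0, the Hankel determinant det(M_{i+j})_{0≤i,j≤n-1} of the Motzkin numbers equals 1 (with the convention that the empty determinant for n = 0 equals 1). -/
open PowerSeries

noncomputable def motzkin (n : ℕ) : ℚ :=
  ∑ k ∈ Finset.range (n + 1), (n.choose (2 * k) : ℚ) * (catalan k : ℚ)

noncomputable def motzkinPS : PowerSeries ℚ := PowerSeries.mk motzkin

noncomputable def motzkinConv (r n : ℕ) : ℚ := PowerSeries.coeff n (motzkinPS ^ r)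

noncomputable def hankel (a : ℕ → ℚ) (n : ℕ) : ℚ :=
  (Matrix.of fun i j : Fin n => a ((i : ℕ) + (j : ℕ))).det

noncomputable def H (r n : ℕ) : ℚ := hankel (motzkinConv r) n


def bal (k j : ℕ) : ℚ := ((k + 2*j).choose j : ℚ) - ((k + 2*j).choose (k + j + 1) : ℚ)

def T (n k : ℕ) : ℚ := ∑ j ∈ Finset.range (n+1), (n.choose (k + 2*j) : ℚ) * bal k j

lemma bal_zero (k : ℕ) : bal k 0 = 1 := by
  simp [bal, Nat.choose_eq_zero_of_lt (by omega : k + 2*0 < k + 0 + 1)]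

lemma T_ext (n k N : ℕ) (hN : n + 1 ≤ N) :
    ∑ j ∈ Finset.range N, (n.choose (k + 2*j) : ℚ) * bal k j = T n k := by
  rw [T]
  apply (Finset.sum_subset (Finset.range_subset_range.mpr hN) ?_).symm
  intro j _ hj
  simp only [Finset.mem_range, not_lt] at hj
  rw [Nat.choose_eq_zero_of_lt (by omega)]
  ring

lemma T_eq_zero (n k : ℕ) (h : n < k) : T n k = 0 := by
  rw [T]
  apply Finset.sum_eq_zero
  intro j _
  rw [Nat.choose_eq_zero_of_lt (by omega)]
  ring

lemma T_diag (n : ℕ) : T n n = 1 := by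
  rw [T, Finset.sum_eq_single 0]
  · simp [bal_zero]
  · intro j _ hj
    rw [Nat.choose_eq_zero_of_lt (by omega)]
    ring
  · intro h; simp at h

lemma T_zero_diag : T 0 0 = 1 := T_diag 0


lemma bal_step_zero (j : ℕ) : bal 0 (j+1) = bal 1 j := by
  unfold bal
  have p1 : (0 + 2*(j+1)).choose (j+1) = (1+2*j).choose j + (1+2*j).choose (j+1) := by
    rw [show 0 + 2*(j+1) = (1+2*j)+1 by ring]; exact Nat.choose_succ_succ _ _
  have p2 : (0 + 2*(j+1)).choose (0+(j+1)+1) = (1+2*j).choose (j+1) + (1+2*j).choose (j+2) := by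
    rw [show 0 + 2*(j+1) = (1+2*j)+1 by ring, show 0+(j+1)+1 = (j+1)+1 by ring]
    exact Nat.choose_succ_succ _ _
  rw [p1, p2]; push_cast
  rw [show 1 + j + 1 = j + 2 by ring]; ring

lemma bal_step (k j : ℕ) : bal (k+1) (j+1) = bal k (j+1) + bal (k+2) j := by
  unfold bal
  have p1 : ((k+1) + 2*(j+1)).choose (j+1) = (k+2*j+2).choose j + (k+2*j+2).choose (j+1) := by
    rw [show (k+1) + 2*(j+1) = (k+2*j+2)+1 by ring]; exact Nat.choose_succ_succ _ _
  have p2 : ((k+1) + 2*(j+1)).choose ((k+1)+(j+1)+1) =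
      (k+2*j+2).choose (k+j+2) + (k+2*j+2).choose (k+j+3) := by
    rw [show (k+1) + 2*(j+1) = (k+2*j+2)+1 by ring, show (k+1)+(j+1)+1 = (k+j+2)+1 by ring]
    exact Nat.choose_succ_succ _ _
  rw [p1, p2]; push_cast
  rw [show k + 2*(j+1) = k+2*j+2 by ring, show k+2+2*j = k+2*j+2 by ring,
    show k+(j+1)+1 = k+j+2 by ring, show k+2+j+1 = k+j+3 by ring]
  ring

lemma T_rec_zero (n : ℕ) : T (n+1) 0 = T n 0 + T n 1 := by
  have expand : T (n+1) 0 = ∑ j ∈ Finset.range (n+2), ((n+1).choose (2*j) : ℚ) * bal 0 j := by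
    rw [T]; congr 1; ext j; rw [show 0 + 2*j = 2*j by ring]
  rw [expand, Finset.sum_range_succ']
  have step : ∀ j, ((n+1).choose (2*(j+1)) : ℚ) * bal 0 (j+1)
      = (n.choose (2*j+1) : ℚ) * bal 1 j + (n.choose (2*(j+1)) : ℚ) * bal 0 (j+1) := by
    intro j
    have h : (n+1).choose (2*(j+1)) = n.choose (2*j+1) + n.choose (2*(j+1)) := by
      have hx : (2*j+1).succ = 2*(j+1) := by omega
      rw [show 2*(j+1) = (2*j+1)+1 by ring, Nat.choose_succ_succ, hx,
        show (2*j+1)+1 = 2*(j+1) by ring]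
    rw [bal_step_zero, h]
    push_cast
    ring
  rw [Finset.sum_congr rfl (fun j _ => step j), Finset.sum_add_distrib]
  have e1 : ∑ j ∈ Finset.range (n+1), (n.choose (2*j+1) : ℚ) * bal 1 j = T n 1 := by
    rw [T]; congr 1; ext j; rw [show 1 + 2*j = 2*j+1 by ring]
  have e2 : ∑ j ∈ Finset.range (n+1), (n.choose (2*(j+1)) : ℚ) * bal 0 (j+1)
      + ((n+1).choose (2*0) : ℚ) * bal 0 0 = T n 0 := by
    have hs := Finset.sum_range_succ' (fun j => (n.choose (2*j) : ℚ) * bal 0 j) (n+1)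
    have ext0 : ∑ j ∈ Finset.range (n+2), (n.choose (2*j) : ℚ) * bal 0 j = T n 0 := by
      rw [← T_ext n 0 (n+2) (by omega)]; congr 1; ext j; rw [show 0 + 2*j = 2*j by ring]
    rw [← ext0, hs]
    norm_num
  rw [e1]
  linarith [e2]

lemma T_rec_succ (n k : ℕ) : T (n+1) (k+1) = T n k + T n (k+1) + T n (k+2) := by
  have expand : T (n+1) (k+1)
      = ∑ j ∈ Finset.range (n+2), ((n+1).choose ((k+2*j)+1) : ℚ) * bal (k+1) j := by
    rw [T]; congr 1; ext j; rw [show (k+1) + 2*j = (k+2*j)+1 by ring]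
  rw [expand]
  have step : ∀ j, ((n+1).choose ((k+2*j)+1) : ℚ) * bal (k+1) j
      = (n.choose (k+2*j) : ℚ) * bal (k+1) j + (n.choose ((k+1)+2*j) : ℚ) * bal (k+1) j := by
    intro j
    have h : (n+1).choose ((k+2*j)+1) = n.choose (k+2*j) + n.choose ((k+1)+2*j) := by
      have hx : (k+2*j).succ = (k+1)+2*j := by omega
      rw [Nat.choose_succ_succ, hx]
    rw [h]
    push_cast
    ring
  rw [Finset.sum_congr rfl (fun j _ => step j), Finset.sum_add_distrib]
  have e2 : ∑ j ∈ Finset.range (n+2), (n.choose ((k+1)+2*j) : ℚ) * bal (k+1) j = T n (k+1) :=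
    T_ext n (k+1) (n+2) (by omega)
  rw [e2]
  have e1 : ∑ j ∈ Finset.range (n+2), (n.choose (k+2*j) : ℚ) * bal (k+1) j
      = T n k + T n (k+2) := by
    rw [Finset.sum_range_succ']
    have step2 : ∀ j, (n.choose (k+2*(j+1)) : ℚ) * bal (k+1) (j+1)
        = (n.choose (k+2*(j+1)) : ℚ) * bal k (j+1) + (n.choose ((k+2)+2*j) : ℚ) * bal (k+2) j := by
      intro j
      rw [bal_step, show (k+2)+2*j = k+2*(j+1) by ring]
      ring
    rw [Finset.sum_congr rfl (fun j _ => step2 j), Finset.sum_add_distrib]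
    have e3 : ∑ j ∈ Finset.range (n+1), (n.choose ((k+2)+2*j) : ℚ) * bal (k+2) j = T n (k+2) := by
      rw [T]
    have e4 : ∑ j ∈ Finset.range (n+1), (n.choose (k+2*(j+1)) : ℚ) * bal k (j+1)
        + (n.choose (k+2*0) : ℚ) * bal (k+1) 0 = T n k := by
      rw [bal_zero]
      have hs := Finset.sum_range_succ' (fun j => (n.choose (k+2*j) : ℚ) * bal k j) (n+1)
      rw [← T_ext n k (n+2) (by omega), hs]
      rw [bal_zero]
    rw [e3]
    linarith [e4]
  rw [e1]; ring

lemma S_step (M i j : ℕ) (hi : i ≤ M) (hj : j ≤ M) :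
    ∑ k ∈ Finset.range (M+2), T (i+1) k * T j k
      = ∑ k ∈ Finset.range (M+2), T i k * T (j+1) k := by
  rw [Finset.sum_range_succ' (fun k => T (i+1) k * T j k) (M+1),
      Finset.sum_range_succ' (fun k => T i k * T (j+1) k) (M+1)]
  simp only [T_rec_succ, T_rec_zero, add_mul, mul_add, Finset.sum_add_distrib]
  have P1 : ∑ k ∈ Finset.range (M+1), T i (k+2) * T j (k+1) + T i 1 * T j 0
      = ∑ k ∈ Finset.range (M+1), T i (k+1) * T j k := by
    rw [Finset.sum_range_succ' (fun k => T i (k+1) * T j k) M]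
    congr 1
    rw [Finset.sum_range_succ, T_eq_zero i (M+2) (by omega)]
    simp
  have P2 : ∑ k ∈ Finset.range (M+1), T i (k+1) * T j (k+2) + T i 0 * T j 1
      = ∑ k ∈ Finset.range (M+1), T i k * T j (k+1) := by
    rw [Finset.sum_range_succ' (fun k => T i k * T j (k+1)) M]
    congr 1
    rw [Finset.sum_range_succ, T_eq_zero j (M+2) (by omega)]
    simp
  linarith [P1, P2]

lemma S_val : ∀ i j : ℕ, ∑ k ∈ Finset.range (i+j+2), T i k * T j k = T (i+j) 0 := by
  intro i
  induction i with
  | zero =>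
    intro j
    rw [Finset.sum_eq_single 0]
    · simp [T_diag]
    · intro k _ hk
      rw [T_eq_zero 0 k (by omega)]
      ring
    · intro h; simp at h
  | succ i ih =>
    intro j
    calc ∑ k ∈ Finset.range (i+1+j+2), T (i+1) k * T j k
        = ∑ k ∈ Finset.range ((i+j+1)+2), T (i+1) k * T j k := by
          rw [show i+1+j+2 = (i+j+1)+2 by ring]
      _ = ∑ k ∈ Finset.range ((i+j+1)+2), T i k * T (j+1) k :=
          S_step (i+j+1) i j (by omega) (by omega)
      _ = T (i+(j+1)) 0 := by rw [show (i+j+1)+2 = i+(j+1)+2 by ring]; exact ih (j+1)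
      _ = T (i+1+j) 0 := by rw [show i+(j+1) = i+1+j by ring]

lemma S_trunc (N i j : ℕ) (hN : i+1 ≤ N) :
    ∑ k ∈ Finset.range N, T i k * T j k = ∑ k ∈ Finset.range (i+1), T i k * T j k := by
  apply (Finset.sum_subset (Finset.range_subset_range.mpr hN) ?_).symm
  intro k _ hk
  simp only [Finset.mem_range, not_lt] at hk
  rw [T_eq_zero i k (by omega)]
  ring

lemma S_val' (N i j : ℕ) (hN : i+1 ≤ N) :
    ∑ k ∈ Finset.range N, T i k * T j k = T (i+j) 0 := by
  rw [S_trunc N i j hN, ← S_trunc (i+j+2) i j (by omega), S_val]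

lemma bal_zero_catalan (j : ℕ) : bal 0 j = (catalan j : ℚ) := by
  have h1 : ((2*j).choose (j+1)) * (j+1) = ((2*j).choose j) * j := by
    have := Nat.choose_succ_right_eq (2*j) j
    simpa [Nat.two_mul, Nat.add_sub_cancel] using this
  have h2 : (j+1) * catalan j = (2*j).choose j := by
    have := succ_mul_catalan_eq_centralBinom j
    simpa [Nat.centralBinom] using this
  unfold bal
  have hj1 : (j:ℚ)+1 ≠ 0 := by positivity
  rw [show 0 + 2*j = 2*j by ring, show 0 + j + 1 = j + 1 by ring]
  have e1 : ((2*j).choose (j+1) : ℚ) * (j+1) = ((2*j).choose j) * j := by exact_mod_cast h1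
  have e2 : ((j:ℚ)+1) * catalan j = (2*j).choose j := by exact_mod_cast h2
  have : (((2*j).choose j : ℚ) - ((2*j).choose (j+1))) * (j+1) = (catalan j : ℚ) * (j+1) := by
    rw [sub_mul, e1]
    nlinarith [e2]
  exact mul_right_cancel₀ hj1 this

lemma motzkin_eq_T (n : ℕ) : motzkin n = T n 0 := by
  rw [motzkin, T]
  apply Finset.sum_congr rfl
  intro j _
  rw [bal_zero_catalan, show 0 + 2*j = 2*j by ring]

theorem motzkin_hankel (n : ℕ) : hankel motzkin n = 1 := by
  classical
  set L : Matrix (Fin n) (Fin n) ℚ := Matrix.of (fun i k : Fin n => T i k) with hL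
  have hM : Matrix.of (fun i j : Fin n => motzkin ((i : ℕ) + (j : ℕ))) = L * L.transpose := by
    ext i j
    rw [Matrix.mul_apply]
    simp only [hL, Matrix.of_apply, Matrix.transpose_apply, motzkin_eq_T]
    rw [Fin.sum_univ_eq_sum_range (fun k => T i k * T j k) n]
    exact (S_val' n i j i.isLt).symm
  have hdet : L.det = 1 := by
    rw [Matrix.det_of_lowerTriangular L ?_]
    · apply Finset.prod_eq_one
      intro i _
      simp [hL, T_diag]
    · intro i j hij
      simp only [OrderDual.toDual_lt_toDual] at hij
      simp only [hL, Matrix.of_apply]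
      exact T_eq_zero i j (by exact_mod_cast hij)
  rw [hankel, hM, Matrix.det_mul, Matrix.det_transpose, hdet]
  norm_num
end

section
/- The generating function F₁ defined by the quadratic equation F₁ = -x(x^3 + 3p(p+1)x − p(p+1)) / (p^2 x^2 F₁ + 2p x^3 + 3p^2 x − p^2), for a positive integer parameter p, is a well-defined formal power series; for p = 1 its Hankel determinants H_k satisfy H_{k+1}(F(x,3)) = H_k(F₁) for all k ≥ 0, where F(x,3) = M(x)^3. -/
open PowerSeries
open Finset

/-- The quadratic functional equation satisfied by `F₁⁽ᵖ⁾`: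
`p² x² F₁² + (2p x³ + 3p² x − p²) F₁ + x (x³ + 3p(p+1) x − p(p+1)) = 0`. -/
noncomputable def F1eqn (p : ℕ) (F : PowerSeries ℚ) : Prop :=
  PowerSeries.C ((p : ℚ) ^ 2) * X ^ 2 * F ^ 2 +
    (PowerSeries.C (2 * (p : ℚ)) * X ^ 3 + PowerSeries.C (3 * (p : ℚ) ^ 2) * X -
      PowerSeries.C ((p : ℚ) ^ 2)) * F +
    X * (X ^ 3 + PowerSeries.C (3 * (p : ℚ) * ((p : ℚ) + 1)) * X -
      PowerSeries.C ((p : ℚ) * ((p : ℚ) + 1))) = 0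


lemma vander (r s m : ℕ) :
    ∑ i ∈ Finset.range (m + 1), (Nat.choose i r) * (Nat.choose (m - i) s) =
      Nat.choose (m + 1) (r + s + 1) := by
  induction r generalizing m with
  | zero =>
    simp only [Nat.choose_zero_right, one_mul]
    rw [← Finset.sum_range_reflect]
    have h1 : ∀ j ∈ Finset.range (m + 1), (m - (m + 1 - 1 - j)).choose s = j.choose s := by
      intro j hj
      simp only [Finset.mem_range] at hj
      congr 1
      omega
    rw [Finset.sum_congr rfl h1]
    have h2 : ∑ j ∈ Finset.range (m + 1), j.choose s = ∑ j ∈ Finset.Icc s m, j.choose s := by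
      symm
      apply Finset.sum_subset
      · intro j hj
        simp only [Finset.mem_Icc] at hj
        simp only [Finset.mem_range]
        omega
      · intro j hj hj2
        simp only [Finset.mem_range] at hj
        simp only [Finset.mem_Icc] at hj2
        exact Nat.choose_eq_zero_of_lt (by omega)
    rw [h2, Nat.sum_Icc_choose]
    simp
  | succ r ih =>
    induction m with
    | zero =>
      simp [Nat.choose_eq_zero_of_lt]
    | succ m ihm =>
      rw [Finset.sum_range_succ']
      have h1 : ∀ i ∈ Finset.range (m + 1),
          (i + 1).choose (r + 1) * (m + 1 - (i + 1)).choose s =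
          i.choose r * (m - i).choose s + i.choose (r + 1) * (m - i).choose s := by
        intro i hi
        rw [Nat.choose_succ_succ, add_mul]
        have : m + 1 - (i + 1) = m - i := by omega
        rw [this]
      rw [Finset.sum_congr rfl h1, Finset.sum_add_distrib, ih m, ihm]
      have h0 : Nat.choose 0 (r + 1) * (m + 1 - 0).choose s = 0 := by
        simp [Nat.choose_eq_zero_of_lt]
      rw [h0, add_zero]
      rw [show r + 1 + s + 1 = (r + s + 1) + 1 from by omega, Nat.choose_succ_succ (m + 1)]

lemma catQ (k : ℕ) :
    ∑ i ∈ Finset.range (k + 1), (catalan i : ℚ) * (catalan (k - i) : ℚ) =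
      (catalan (k + 1) : ℚ) := by
  rw [catalan_succ' k, Nat.sum_antidiagonal_eq_sum_range_succ_mk]
  push_cast
  rfl

lemma motzkin_eq_sum (n i : ℕ) (h : i ≤ n) :
    motzkin i = ∑ a ∈ Finset.range (n + 1), (i.choose (2 * a) : ℚ) * (catalan a : ℚ) := by
  unfold motzkin
  apply Finset.sum_subset
  · intro a ha
    simp only [Finset.mem_range] at ha ⊢
    omega
  · intro a ha ha2
    simp only [Finset.mem_range] at ha ha2
    rw [Nat.choose_eq_zero_of_lt (by omega)]
    simp

lemma motzkin_rec (n : ℕ) :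
    motzkin (n + 2) = motzkin (n + 1) +
      ∑ i ∈ Finset.range (n + 1), motzkin i * motzkin (n - i) := by
  -- Step 1 : rewrite the convolution sum
  have step1 : ∑ i ∈ Finset.range (n + 1), motzkin i * motzkin (n - i) =
      ∑ a ∈ Finset.range (n + 1), ∑ b ∈ Finset.range (n + 1),
        (((n + 1).choose (2 * a + 2 * b + 1) : ℚ)) * ((catalan a : ℚ) * (catalan b : ℚ)) := by
    have e1 : ∀ i ∈ Finset.range (n + 1), motzkin i * motzkin (n - i) =
        ∑ a ∈ Finset.range (n + 1), ∑ b ∈ Finset.range (n + 1),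
          ((i.choose (2 * a) : ℚ) * (catalan a : ℚ)) *
            (((n - i).choose (2 * b) : ℚ) * (catalan b : ℚ)) := by
      intro i hi
      simp only [Finset.mem_range] at hi
      rw [motzkin_eq_sum n i (by omega), motzkin_eq_sum n (n - i) (by omega),
        Finset.sum_mul_sum]
    rw [Finset.sum_congr rfl e1]
    rw [Finset.sum_comm]
    refine Finset.sum_congr rfl fun a _ => ?_
    rw [Finset.sum_comm]
    refine Finset.sum_congr rfl fun b _ => ?_
    have e2 : ∑ i ∈ Finset.range (n + 1),
        ((i.choose (2 * a) : ℚ) * (catalan a : ℚ)) *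
          (((n - i).choose (2 * b) : ℚ) * (catalan b : ℚ)) =
        (∑ i ∈ Finset.range (n + 1), ((i.choose (2 * a) : ℚ) * ((n - i).choose (2 * b) : ℚ)))
          * ((catalan a : ℚ) * (catalan b : ℚ)) := by
      rw [Finset.sum_mul]
      exact Finset.sum_congr rfl fun i _ => by ring
    rw [e2]
    congr 1
    push_cast [← vander (2 * a) (2 * b) n]
    exact Finset.sum_congr rfl fun i _ => by norm_cast
  -- Step 2 : group by a + b
  have step2 : ∑ a ∈ Finset.range (n + 1), ∑ b ∈ Finset.range (n + 1),
        (((n + 1).choose (2 * a + 2 * b + 1) : ℚ)) * ((catalan a : ℚ) * (catalan b : ℚ)) =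
      ∑ m ∈ Finset.range (n + 1), ((n + 1).choose (2 * m + 1) : ℚ) * (catalan (m + 1) : ℚ) := by
    have tr : ∀ a ∈ Finset.range (n + 1),
        ∑ b ∈ Finset.range (n + 1),
          (((n + 1).choose (2 * a + 2 * b + 1) : ℚ)) * ((catalan a : ℚ) * (catalan b : ℚ)) =
        ∑ b ∈ Finset.range (n + 1 - a),
          (((n + 1).choose (2 * a + 2 * b + 1) : ℚ)) * ((catalan a : ℚ) * (catalan b : ℚ)) := by
      intro a ha
      simp only [Finset.mem_range] at ha
      symm
      apply Finset.sum_subset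
      · intro b hb; simp only [Finset.mem_range] at hb ⊢; omega
      · intro b hb hb2
        simp only [Finset.mem_range] at hb hb2
        rw [Nat.choose_eq_zero_of_lt (by omega)]
        simp
    rw [Finset.sum_congr rfl tr]
    rw [← Finset.sum_range_diag_flip (n + 1)
      (fun a b => (((n + 1).choose (2 * a + 2 * b + 1) : ℚ)) * ((catalan a : ℚ) * (catalan b : ℚ)))]
    refine Finset.sum_congr rfl fun m hm => ?_
    simp only [Finset.mem_range] at hm
    have e3 : ∀ k ∈ Finset.range (m + 1),
        (((n + 1).choose (2 * k + 2 * (m - k) + 1) : ℚ)) *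
            ((catalan k : ℚ) * (catalan (m - k) : ℚ)) =
        ((n + 1).choose (2 * m + 1) : ℚ) * ((catalan k : ℚ) * (catalan (m - k) : ℚ)) := by
      intro k hk
      simp only [Finset.mem_range] at hk
      rw [show 2 * k + 2 * (m - k) = 2 * m from by omega]
    rw [Finset.sum_congr rfl e3, ← Finset.mul_sum, catQ]
  rw [step1, step2]
  -- Step 3 : compute motzkin (n+2) - motzkin (n+1)
  have e4 : motzkin (n + 2) = ∑ k ∈ Finset.range (n + 2), ((n + 2).choose (2 * k) : ℚ) * (catalan k : ℚ) := by
    unfold motzkin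
    rw [Finset.sum_range_succ, Nat.choose_eq_zero_of_lt (by omega)]
    simp
  rw [e4]
  unfold motzkin
  rw [Finset.sum_range_succ' (fun k => ((n + 2).choose (2 * k) : ℚ) * (catalan k : ℚ)) (n + 1),
      Finset.sum_range_succ' (fun k => ((n + 1).choose (2 * k) : ℚ) * (catalan k : ℚ)) (n + 1)]
  simp only [Nat.mul_zero, Nat.choose_zero_right, Nat.cast_one, catalan_zero]
  have e5 : ∀ k ∈ Finset.range (n + 1),
      ((n + 2).choose (2 * (k + 1)) : ℚ) * (catalan (k + 1) : ℚ) =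
      ((n + 1).choose (2 * (k + 1)) : ℚ) * (catalan (k + 1) : ℚ) +
        ((n + 1).choose (2 * k + 1) : ℚ) * (catalan (k + 1) : ℚ) := by
    intro k hk
    rw [show 2 * (k + 1) = (2 * k + 1) + 1 from by ring,
       show n + 2 = (n + 1) + 1 from rfl, Nat.choose_succ_succ (n + 1) (2 * k + 1)]
    push_cast
    ring
  rw [Finset.sum_congr rfl e5, Finset.sum_add_distrib]
  ring

lemma motzkin_fe : motzkinPS = 1 + X * motzkinPS + X ^ 2 * motzkinPS ^ 2 := by
  ext n
  rw [map_add, map_add]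
  match n with
  | 0 =>
    simp [motzkinPS, motzkin, PowerSeries.coeff_zero_eq_constantCoeff]
  | 1 =>
    rw [PowerSeries.coeff_one, PowerSeries.coeff_succ_X_mul]
    have h2 : (PowerSeries.coeff 1) (X ^ 2 * motzkinPS ^ 2) = 0 := by
      rw [PowerSeries.coeff_X_pow_mul']
      simp
    rw [h2]
    simp [motzkinPS, motzkin, Finset.sum_range_succ]
  | (n + 2) =>
    rw [PowerSeries.coeff_succ_X_mul, show n + 2 = n + 2 from rfl]
    have h1 : (PowerSeries.coeff (n + 2)) (X ^ 2 * motzkinPS ^ 2) =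
        PowerSeries.coeff n (motzkinPS ^ 2) := by
      rw [show (n + 2) = n + 2 from rfl, ← PowerSeries.coeff_X_pow_mul (motzkinPS ^ 2) 2 n]
    rw [h1, pow_two, PowerSeries.coeff_mul, Finset.Nat.sum_antidiagonal_eq_sum_range_succ_mk]
    simp only [motzkinPS, PowerSeries.coeff_mk, PowerSeries.coeff_one]
    rw [motzkin_rec n]
    simp
lemma motzkin_unit : motzkinPS * (1 - X - X ^ 2 * motzkinPS) = 1 := by
  linear_combination motzkin_fe

lemma motzkin_cube : (1 - X - X ^ 2 * motzkinPS) ^ 3 =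
    1 - 3 * X + 2 * X ^ 3 - X ^ 6 * motzkinPS ^ 3 := by
  linear_combination (-3 * X ^ 2 * (1 - X)) * motzkin_fe

lemma hM3 : motzkinPS ^ 3 * (1 - 3 * X + 2 * X ^ 3 - X ^ 6 * motzkinPS ^ 3) = 1 := by
  rw [← motzkin_cube]
  calc motzkinPS ^ 3 * (1 - X - X ^ 2 * motzkinPS) ^ 3
      = (motzkinPS * (1 - X - X ^ 2 * motzkinPS)) ^ 3 := by ring
    _ = 1 := by rw [motzkin_unit]; ring

lemma F1_exists (p : ℕ) (hp : 1 ≤ p) :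
    F1eqn p (X ^ 4 * motzkinPS ^ 3 - PowerSeries.C (((p : ℚ) + 1) / (p : ℚ)) * X) := by
  have hp0 : (p : ℚ) ≠ 0 := by
    simp only [ne_eq, Nat.cast_eq_zero]; omega
  have hq : PowerSeries.C (p : ℚ) * PowerSeries.C (((p : ℚ) + 1) / (p : ℚ)) =
      PowerSeries.C (p : ℚ) + 1 := by
    rw [← map_mul]
    rw [show (p : ℚ) * (((p : ℚ) + 1) / (p : ℚ)) = (p : ℚ) + 1 from by field_simp]
    rw [map_add, map_one]
  unfold F1eqn
  simp only [map_pow, map_mul, map_add, map_one, map_ofNat]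
  set Cq := PowerSeries.C (p : ℚ)
  set Ck := PowerSeries.C (((p : ℚ) + 1) / (p : ℚ))
  set W := motzkinPS ^ 3
  linear_combination (-(Cq ^ 2) * X ^ 4) * hM3 +
    (-2 * Cq * X ^ 7 * W + (Cq * Ck + Cq - 1) * X ^ 4 - 3 * Cq * X ^ 2 + Cq * X) * hq

lemma F1_unique (p : ℕ) (hp : 1 ≤ p) (F G : PowerSeries ℚ)
    (hF : F1eqn p F) (hG : F1eqn p G) : F = G := by
  have key : (F - G) * (PowerSeries.C ((p : ℚ) ^ 2) * X ^ 2 * (F + G) +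
      (PowerSeries.C (2 * (p : ℚ)) * X ^ 3 + PowerSeries.C (3 * (p : ℚ) ^ 2) * X -
        PowerSeries.C ((p : ℚ) ^ 2))) = 0 := by
    unfold F1eqn at hF hG
    linear_combination hF - hG
  have hne : (PowerSeries.C ((p : ℚ) ^ 2) * X ^ 2 * (F + G) +
      (PowerSeries.C (2 * (p : ℚ)) * X ^ 3 + PowerSeries.C (3 * (p : ℚ) ^ 2) * X -
        PowerSeries.C ((p : ℚ) ^ 2))) ≠ 0 := by
    intro h0
    have h1 := congrArg (PowerSeries.constantCoeff) h0
    simp only [map_add, map_sub, map_mul, map_pow, PowerSeries.constantCoeff_X,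
      PowerSeries.constantCoeff_C, map_zero, mul_zero, zero_mul, ne_eq, zero_pow,
      OfNat.ofNat_ne_zero, not_false_eq_true, zero_add, zero_sub, map_one] at h1
    have hp0 : (p : ℚ) ≠ 0 := by
      simp only [ne_eq, Nat.cast_eq_zero]; omega
    have : ((p : ℚ) ^ 2) = 0 := by linarith [h1]
    exact hp0 (by
      have := pow_eq_zero_iff (n := 2) (by norm_num) |>.mp this
      exact this)
  rcases mul_eq_zero.mp key with h | h
  · exact sub_eq_zero.mp h
  · exact absurd h hne

section HankelStep

variable (A B : PowerSeries ℚ)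

lemma hs_c0 : PowerSeries.coeff 0 (1 - 3 * X - X ^ 2 * B) = 1 := by
  simp [PowerSeries.coeff_zero_eq_constantCoeff]

lemma hs_c2 (k : ℕ) :
    PowerSeries.coeff (k + 2) (1 - 3 * X - X ^ 2 * B) =
      -(PowerSeries.coeff k B) := by
  rw [map_sub, map_sub]
  rw [show (3 : PowerSeries ℚ) * X = PowerSeries.C 3 * X from by rw [map_ofNat]]
  rw [PowerSeries.coeff_C_mul, PowerSeries.coeff_X]
  rw [show k + 2 = k + 2 from rfl, ← PowerSeries.coeff_X_pow_mul B 2 k]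
  have h1 : (PowerSeries.coeff (k + 2)) (1 : PowerSeries ℚ) = 0 := by
    rw [PowerSeries.coeff_one]; simp
  rw [h1]
  simp

lemma hs_conv (hAB : A * (1 - 3 * X - X ^ 2 * B) = 1) (m : ℕ) :
    ∑ t ∈ Finset.range (m + 1),
      (PowerSeries.coeff t A) * (PowerSeries.coeff (m - t) (1 - 3 * X - X ^ 2 * B)) =
      if m = 0 then 1 else 0 := by
  have := congrArg (PowerSeries.coeff m) hAB
  rw [PowerSeries.coeff_mul, Finset.Nat.sum_antidiagonal_eq_sum_range_succ_mk,
    PowerSeries.coeff_one] at this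
  exact this

lemma hs_S1 (hAB : A * (1 - 3 * X - X ^ 2 * B) = 1) (k j : ℕ) :
    ∑ l ∈ Finset.range (j + 1),
      (PowerSeries.coeff (k + l) A) *
        (PowerSeries.coeff (j - l) (1 - 3 * X - X ^ 2 * B)) =
      if k = 0 then (if j = 0 then 1 else 0)
      else -∑ m ∈ Finset.range k,
        (PowerSeries.coeff (j + 1 + m) (1 - 3 * X - X ^ 2 * B)) *
          (PowerSeries.coeff (k - 1 - m) A) := by
  match k with
  | 0 => simpa using hs_conv A B hAB j
  | (k + 1) =>
    have h0 := hs_conv A B hAB (k + 1 + j)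
    rw [if_neg (by omega)] at h0
    rw [show k + 1 + j + 1 = (k + 1) + (j + 1) from by ring] at h0
    rw [Finset.sum_range_add] at h0
    have e1 : ∀ l ∈ Finset.range (j + 1),
        (PowerSeries.coeff (k + 1 + l) A) *
          (PowerSeries.coeff (k + 1 + j - (k + 1 + l)) (1 - 3 * X - X ^ 2 * B)) =
        (PowerSeries.coeff (k + 1 + l) A) *
          (PowerSeries.coeff (j - l) (1 - 3 * X - X ^ 2 * B)) := by
      intro l hl
      rw [show k + 1 + j - (k + 1 + l) = j - l from by omega]
    rw [Finset.sum_congr rfl e1] at h0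
    rw [if_neg (by omega)]
    have e2 : ∑ t ∈ Finset.range (k + 1),
        (PowerSeries.coeff t A) *
          (PowerSeries.coeff (k + 1 + j - t) (1 - 3 * X - X ^ 2 * B)) =
        ∑ m ∈ Finset.range (k + 1),
          (PowerSeries.coeff (j + 1 + m) (1 - 3 * X - X ^ 2 * B)) *
            (PowerSeries.coeff (k + 1 - 1 - m) A) := by
      rw [← Finset.sum_range_reflect]
      refine Finset.sum_congr rfl fun m hm => ?_
      simp only [Finset.mem_range] at hm
      rw [show k + 1 + j - (k + 1 - 1 - m) = j + 1 + m from by omega]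
      rw [show k + 1 - 1 - m = k - m from by omega]
      ring
    rw [e2] at h0
    linarith [h0]

lemma hs_entry (hAB : A * (1 - 3 * X - X ^ 2 * B) = 1) (i j : ℕ) :
    ∑ k ∈ Finset.range (i + 1),
      (PowerSeries.coeff (i - k) (1 - 3 * X - X ^ 2 * B)) *
        (∑ l ∈ Finset.range (j + 1),
          (PowerSeries.coeff (k + l) A) *
            (PowerSeries.coeff (j - l) (1 - 3 * X - X ^ 2 * B))) =
      if i = 0 then (if j = 0 then 1 else 0)
      else if j = 0 then 0
      else -(PowerSeries.coeff (i + j) (1 - 3 * X - X ^ 2 * B)) := by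
  have hS1 : ∀ k, ∑ l ∈ Finset.range (j + 1),
      (PowerSeries.coeff (k + l) A) *
        (PowerSeries.coeff (j - l) (1 - 3 * X - X ^ 2 * B)) =
      if k = 0 then (if j = 0 then 1 else 0)
      else -∑ m ∈ Finset.range k,
        (PowerSeries.coeff (j + 1 + m) (1 - 3 * X - X ^ 2 * B)) *
          (PowerSeries.coeff (k - 1 - m) A) := fun k => hs_S1 A B hAB k j
  simp only [hS1]
  rw [Finset.sum_range_succ']
  -- the tail sum
  have tail : ∑ k ∈ Finset.range i,
      (PowerSeries.coeff (i - (k + 1)) (1 - 3 * X - X ^ 2 * B)) *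
        (if k + 1 = 0 then (if j = 0 then (1:ℚ) else 0)
         else -∑ m ∈ Finset.range (k + 1),
            (PowerSeries.coeff (j + 1 + m) (1 - 3 * X - X ^ 2 * B)) *
              (PowerSeries.coeff (k + 1 - 1 - m) A)) =
      -(if i = 0 then 0 else PowerSeries.coeff (i + j) (1 - 3 * X - X ^ 2 * B)) := by
    have e1 : ∀ k ∈ Finset.range i,
        (PowerSeries.coeff (i - (k + 1)) (1 - 3 * X - X ^ 2 * B)) *
          (if k + 1 = 0 then (if j = 0 then (1:ℚ) else 0)
           else -∑ m ∈ Finset.range (k + 1),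
              (PowerSeries.coeff (j + 1 + m) (1 - 3 * X - X ^ 2 * B)) *
                (PowerSeries.coeff (k + 1 - 1 - m) A)) =
        -(∑ m ∈ Finset.range (k + 1),
            (PowerSeries.coeff (j + 1 + m) (1 - 3 * X - X ^ 2 * B)) *
              ((PowerSeries.coeff (k - m) A) *
                (PowerSeries.coeff (i - 1 - (m + (k - m))) (1 - 3 * X - X ^ 2 * B)))) := by
      intro k hk
      simp only [Finset.mem_range] at hk
      rw [if_neg (by omega)]
      rw [mul_neg, Finset.mul_sum, neg_inj]
      refine Finset.sum_congr rfl fun m hm => ?_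
      simp only [Finset.mem_range] at hm
      rw [show k + 1 - 1 - m = k - m from by omega,
          show i - (k + 1) = i - 1 - (m + (k - m)) from by omega]
      ring
    rw [Finset.sum_congr rfl e1, Finset.sum_neg_distrib]
    congr 1
    rw [Finset.sum_range_diag_flip i
        (fun m t => (PowerSeries.coeff (j + 1 + m) (1 - 3 * X - X ^ 2 * B)) *
          ((PowerSeries.coeff t A) *
            (PowerSeries.coeff (i - 1 - (m + t)) (1 - 3 * X - X ^ 2 * B))))]
    match i with
    | 0 => simp
    | (i + 1) =>
      rw [if_neg (by omega)]
      have e2 : ∀ m ∈ Finset.range (i + 1),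
          ∑ t ∈ Finset.range (i + 1 - m),
            (PowerSeries.coeff (j + 1 + m) (1 - 3 * X - X ^ 2 * B)) *
              ((PowerSeries.coeff t A) *
                (PowerSeries.coeff (i + 1 - 1 - (m + t)) (1 - 3 * X - X ^ 2 * B))) =
          (PowerSeries.coeff (j + 1 + m) (1 - 3 * X - X ^ 2 * B)) *
            (if i - m = 0 then 1 else 0) := by
        intro m hm
        simp only [Finset.mem_range] at hm
        rw [← Finset.mul_sum]
        congr 1
        have e3 : ∑ t ∈ Finset.range (i + 1 - m),
            (PowerSeries.coeff t A) *
              (PowerSeries.coeff (i + 1 - 1 - (m + t)) (1 - 3 * X - X ^ 2 * B)) =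
            ∑ t ∈ Finset.range ((i - m) + 1),
              (PowerSeries.coeff t A) *
                (PowerSeries.coeff ((i - m) - t) (1 - 3 * X - X ^ 2 * B)) := by
          rw [show i + 1 - m = (i - m) + 1 from by omega]
          refine Finset.sum_congr rfl fun t ht => ?_
          simp only [Finset.mem_range] at ht
          rw [show i + 1 - 1 - (m + t) = (i - m) - t from by omega]
        rw [e3, hs_conv A B hAB (i - m)]
      rw [Finset.sum_congr rfl e2]
      rw [Finset.sum_eq_single i]
      · rw [if_pos (by omega), mul_one, show j + 1 + i = i + 1 + j from by omega]
      · intro m hm hmne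
        simp only [Finset.mem_range] at hm
        rw [if_neg (by omega), mul_zero]
      · intro h
        exact absurd (Finset.mem_range.mpr (by omega)) h
  rw [tail]
  rw [if_pos rfl, Nat.sub_zero]
  by_cases hi : i = 0
  · subst hi
    rw [if_pos rfl, if_pos rfl, hs_c0 B]
    by_cases hj : j = 0 <;> simp [hj]
  · rw [if_neg hi, if_neg hi]
    by_cases hj : j = 0
    · subst hj
      rw [if_pos rfl, if_pos rfl, mul_one, Nat.add_zero]
      ring
    · rw [if_neg hj, if_neg hj, mul_zero]
      ring

lemma hankel_step (hAB : A * (1 - 3 * X - X ^ 2 * B) = 1) (n : ℕ) :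
    hankel (fun k => PowerSeries.coeff k A) (n + 1) =
      hankel (fun k => PowerSeries.coeff k B) n := by
  classical
  set c : ℕ → ℚ := fun k => PowerSeries.coeff k (1 - 3 * X - X ^ 2 * B) with hc
  set L : Matrix (Fin (n + 1)) (Fin (n + 1)) ℚ :=
    Matrix.of (fun i k : Fin (n + 1) => if (k : ℕ) ≤ (i : ℕ) then c ((i : ℕ) - (k : ℕ)) else 0)
    with hL
  set HA : Matrix (Fin (n + 1)) (Fin (n + 1)) ℚ :=
    Matrix.of (fun i j : Fin (n + 1) => PowerSeries.coeff ((i : ℕ) + (j : ℕ)) A) with hHA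
  set E : Matrix (Fin (n + 1)) (Fin (n + 1)) ℚ :=
    Matrix.of (fun i j : Fin (n + 1) =>
      if (i : ℕ) = 0 then (if (j : ℕ) = 0 then (1 : ℚ) else 0)
      else if (j : ℕ) = 0 then 0 else -(c ((i : ℕ) + (j : ℕ)))) with hE
  -- the key matrix identity
  have key : L * HA * L.transpose = E := by
    ext i j
    rw [Matrix.mul_apply]
    simp only [Matrix.mul_apply, Matrix.transpose_apply, hL, hHA, Matrix.of_apply]
    have lhs1 : ∑ x : Fin (n + 1),
        (∑ y : Fin (n + 1),
          (if (y : ℕ) ≤ (i : ℕ) then c ((i : ℕ) - (y : ℕ)) else 0) *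
            PowerSeries.coeff ((y : ℕ) + (x : ℕ)) A) *
          (if (x : ℕ) ≤ (j : ℕ) then c ((j : ℕ) - (x : ℕ)) else 0) =
        ∑ y : Fin (n + 1),
          (if (y : ℕ) ≤ (i : ℕ) then c ((i : ℕ) - (y : ℕ)) else 0) *
            (∑ x : Fin (n + 1), PowerSeries.coeff ((y : ℕ) + (x : ℕ)) A *
              (if (x : ℕ) ≤ (j : ℕ) then c ((j : ℕ) - (x : ℕ)) else 0)) := by
      simp only [Finset.sum_mul, Finset.mul_sum]
      rw [Finset.sum_comm]
      refine Finset.sum_congr rfl fun y _ => Finset.sum_congr rfl fun x _ => by ring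
    rw [lhs1]
    have inner : ∀ y : Fin (n + 1),
        ∑ x : Fin (n + 1), PowerSeries.coeff ((y : ℕ) + (x : ℕ)) A *
            (if (x : ℕ) ≤ (j : ℕ) then c ((j : ℕ) - (x : ℕ)) else 0) =
        ∑ l ∈ Finset.range ((j : ℕ) + 1),
          PowerSeries.coeff ((y : ℕ) + l) A * c ((j : ℕ) - l) := by
      intro y
      rw [Fin.sum_univ_eq_sum_range (fun l => PowerSeries.coeff ((y : ℕ) + l) A *
        (if l ≤ (j : ℕ) then c ((j : ℕ) - l) else 0)) (n + 1)]
      rw [← Finset.sum_subset (Finset.range_subset_range.mpr (by omega : (j : ℕ) + 1 ≤ n + 1))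
        (fun l _ hl => by
          rw [if_neg (by simp only [Finset.mem_range] at hl ⊢; omega), mul_zero])]
      refine Finset.sum_congr rfl fun l hl => ?_
      simp only [Finset.mem_range] at hl
      rw [if_pos (by omega)]
    simp only [inner]
    have outer : ∑ y : Fin (n + 1),
        (if (y : ℕ) ≤ (i : ℕ) then c ((i : ℕ) - (y : ℕ)) else 0) *
          (∑ l ∈ Finset.range ((j : ℕ) + 1),
            PowerSeries.coeff ((y : ℕ) + l) A * c ((j : ℕ) - l)) =
        ∑ k ∈ Finset.range ((i : ℕ) + 1),
          c ((i : ℕ) - k) * (∑ l ∈ Finset.range ((j : ℕ) + 1),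
            PowerSeries.coeff (k + l) A * c ((j : ℕ) - l)) := by
      rw [Fin.sum_univ_eq_sum_range (fun k =>
        (if k ≤ (i : ℕ) then c ((i : ℕ) - k) else 0) *
          (∑ l ∈ Finset.range ((j : ℕ) + 1),
            PowerSeries.coeff (k + l) A * c ((j : ℕ) - l))) (n + 1)]
      rw [← Finset.sum_subset (Finset.range_subset_range.mpr (by omega : (i : ℕ) + 1 ≤ n + 1))
        (fun k _ hk => by
          rw [if_neg (by simp only [Finset.mem_range] at hk ⊢; omega), zero_mul])]
      refine Finset.sum_congr rfl fun k hk => ?_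
      simp only [Finset.mem_range] at hk
      rw [if_pos (by omega)]
    rw [outer]
    exact hs_entry A B hAB (i : ℕ) (j : ℕ)
  -- determinant of L
  have detL : L.det = 1 := by
    rw [Matrix.det_of_lowerTriangular L (by
      intro i j hij
      have : (i : ℕ) < (j : ℕ) := hij
      simp only [hL, Matrix.of_apply]
      rw [if_neg (by omega)])]
    have : ∀ i : Fin (n + 1), L i i = 1 := by
      intro i
      simp only [hL, Matrix.of_apply, if_pos (le_refl _), Nat.sub_self]
      exact hs_c0 B
    simp [this]
  -- determinant of E
  have detE : E.det = hankel (fun k => PowerSeries.coeff k B) n := by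
    rw [Matrix.det_succ_column_zero]
    rw [Finset.sum_eq_single (0 : Fin (n + 1))]
    · have h00 : E 0 0 = 1 := by simp [hE]
      rw [h00]
      have hsub : E.submatrix (Fin.succAbove 0) Fin.succ =
          Matrix.of (fun i j : Fin n => PowerSeries.coeff ((i : ℕ) + (j : ℕ)) B) := by
        ext i j
        simp only [Matrix.submatrix_apply, Fin.succAbove_zero, hE, Matrix.of_apply]
        rw [if_neg (by simp [Fin.val_succ]), if_neg (by simp [Fin.val_succ])]
        simp only [Fin.val_succ]
        rw [show (i : ℕ) + 1 + ((j : ℕ) + 1) = ((i : ℕ) + (j : ℕ)) + 2 from by omega]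
        show -(PowerSeries.coeff ((i : ℕ) + (j : ℕ) + 2) (1 - 3 * X - X ^ 2 * B)) =
          PowerSeries.coeff ((i : ℕ) + (j : ℕ)) B
        rw [hs_c2 B ((i : ℕ) + (j : ℕ))]
        ring
      rw [hsub]
      simp [hankel]
    · intro b _ hb
      have : E b 0 = 0 := by
        simp only [hE, Matrix.of_apply]
        rw [if_neg (by
          intro h
          exact hb (Fin.ext h))]
        simp
      rw [this]
      ring
    · intro h
      exact absurd (Finset.mem_univ _) h
  -- conclude
  have : hankel (fun k => PowerSeries.coeff k A) (n + 1) = HA.det := rfl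
  rw [this, ← detE, ← key, Matrix.det_mul, Matrix.det_mul, Matrix.det_transpose, detL]
  ring

end HankelStep


theorem F1_wellDefined_and_hankel :
    (∀ p : ℕ, 1 ≤ p → ∃! F : PowerSeries ℚ, F1eqn p F) ∧
    (∀ F : PowerSeries ℚ, F1eqn 1 F →
      ∀ k : ℕ, hankel (fun n => PowerSeries.coeff n (motzkinPS ^ 3)) (k + 1) =
        hankel (fun n => PowerSeries.coeff n F) k) := by
  constructor
  · intro p hp
    exact ⟨_, F1_exists p hp, fun G hG => F1_unique p hp G _ hG (F1_exists p hp)⟩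
  · intro F hF k
    have hFeq : F = X ^ 4 * motzkinPS ^ 3 -
        PowerSeries.C ((((1 : ℕ) : ℚ) + 1) / ((1 : ℕ) : ℚ)) * X :=
      F1_unique 1 le_rfl F _ hF (F1_exists 1 le_rfl)
    have hC2 : PowerSeries.C ((((1 : ℕ) : ℚ) + 1) / ((1 : ℕ) : ℚ)) = (2 : PowerSeries ℚ) := by
      rw [show (((1 : ℕ) : ℚ) + 1) / ((1 : ℕ) : ℚ) = (2 : ℚ) from by norm_num]
      exact map_ofNat (PowerSeries.C) 2
    have hrel : (motzkinPS ^ 3) * (1 - 3 * X - X ^ 2 * F) = 1 := by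
      rw [hFeq, hC2]
      linear_combination hM3
    exact hankel_step (motzkinPS ^ 3) F hrel k
end
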